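/- Let ⟨aⁱ : i < ω⟩ be an independent sequence of conditionally convergent real series and let ⟨xᵢ : i < ω⟩ be any sequence of real numbers. Then there is a single permutation p of ℕ such that, for each i ∈ ℕ, the series Σ_{j∈ℕ} aⁱ_{p(j)} converges to xᵢ. -/

import Mathlib

open Filter

set_option linter.unusedSectionVars false
set_option linter.unusedVariables false

section FR
open Finset

lemma fracRound {E : Type*} [AddCommGroup E] [Module ℝ E] [FiniteDimensional ℝ E]
    (I : Finset ℕ) (w : ℕ → E) :
    ∀ (c : ℕ) (t : ℕ → ℝ), (I.filter fun n => t n ≠ 0 ∧ t n ≠ 1).card ≤ c →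
      (∀ n ∈ I, t n ∈ Set.Icc (0:ℝ) 1) →
    ∃ t' : ℕ → ℝ, (∀ n ∈ I, t' n ∈ Set.Icc (0:ℝ) 1) ∧
      (∑ n ∈ I, t' n • w n) = (∑ n ∈ I, t n • w n) ∧
      (I.filter fun n => t' n ≠ 0 ∧ t' n ≠ 1).card ≤ Module.finrank ℝ E := by
  intro c
  induction c with
  | zero => exact fun t hc ht => ⟨t, ht, rfl, hc.trans (Nat.zero_le _)⟩
  | succ c ih =>
    intro t hc ht
    by_cases hD : (I.filter fun n => t n ≠ 0 ∧ t n ≠ 1).card ≤ Module.finrank ℝ E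
    · exact ⟨t, ht, rfl, hD⟩
    push_neg at hD
    set S := I.filter (fun n => t n ≠ 0 ∧ t n ≠ 1) with hSdef
    have hSI : S ⊆ I := filter_subset _ _
    have hSfr : ∀ n ∈ S, 0 < t n ∧ t n < 1 := by
      intro n hn
      rw [hSdef, mem_filter] at hn
      obtain ⟨hnI, h0, h1⟩ := hn
      obtain ⟨hl, hu⟩ := ht n hnI
      exact ⟨hl.lt_of_ne (Ne.symm h0), hu.lt_of_ne h1⟩
    have hnli : ¬ LinearIndependent ℝ (fun n : ↥S => w n) := by
      intro h
      have := h.fintype_card_le_finrank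
      rw [Fintype.card_coe] at this
      omega
    obtain ⟨g, hg0, i₀, hgi₀⟩ := Fintype.not_linearIndependent_iff.mp hnli
    set cf : ℕ → ℝ := fun n => if h : n ∈ S then g ⟨n, h⟩ else 0 with hcf
    have hcfS : ∑ n ∈ S, cf n • w n = 0 := by
      rw [← Finset.sum_coe_sort S (fun n => cf n • w n)]
      have : ∀ i : ↥S, cf ↑i • w ↑i = g i • w ↑i := by
        intro i; simp [hcf, i.2]
      rw [Finset.sum_congr rfl (fun i _ => this i)]
      exact hg0
    have hcfI : ∑ n ∈ I, cf n • w n = 0 := by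
      rw [← hcfS]
      refine (Finset.sum_subset hSI ?_).symm
      intro n _ hnS
      simp [hcf, hnS]
    have hcf0 : ∀ n, cf n ≠ 0 → n ∈ S := by
      intro n h
      by_contra hn
      simp [hcf, hn] at h
    set S' := S.filter (fun n => cf n ≠ 0) with hS'
    have hne : S'.Nonempty := by
      refine ⟨(i₀ : ℕ), ?_⟩
      rw [hS', mem_filter]
      refine ⟨i₀.2, ?_⟩
      simpa [hcf, i₀.2] using hgi₀
    set r : ℕ → ℝ := fun n => if 0 < cf n then (1 - t n)/(cf n) else (t n)/(-(cf n)) with hr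
    have hrpos : ∀ n ∈ S', 0 < r n := by
      intro n hn
      rw [hS', mem_filter] at hn
      obtain ⟨hnS, hcfn⟩ := hn
      obtain ⟨h0, h1⟩ := hSfr n hnS
      rw [hr]
      by_cases hp : 0 < cf n
      · simp only [hp, if_pos]
        exact div_pos (by linarith) hp
      · simp only [hp, if_neg]
        have : cf n < 0 := lt_of_le_of_ne (not_lt.mp hp) hcfn
        exact div_pos h0 (by linarith)
    set ts := S'.inf' hne r with hts
    have htsle : ∀ n ∈ S', ts ≤ r n := fun n hn => Finset.inf'_le r hn
    have htspos : 0 < ts := by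
      rw [hts, Finset.lt_inf'_iff]
      exact hrpos
    set t2 : ℕ → ℝ := fun n => t n + ts * cf n with ht2
    have hmemS' : ∀ n, cf n ≠ 0 → n ∈ S' := by
      intro n h
      rw [hS', mem_filter]
      exact ⟨hcf0 n h, h⟩
    have ht2mem : ∀ n ∈ I, t2 n ∈ Set.Icc (0:ℝ) 1 := by
      intro n hnI
      by_cases hcfn : cf n = 0
      · simpa [ht2, hcfn] using ht n hnI
      have hnS' := hmemS' n hcfn
      have hle := htsle n hnS'
      obtain ⟨h0, h1⟩ := hSfr n (hcf0 n hcfn)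
      constructor
      · by_cases hp : 0 < cf n
        · have : 0 ≤ ts * cf n := le_of_lt (mul_pos htspos hp)
          simp only [ht2]; linarith
        · have hneg : cf n < 0 := lt_of_le_of_ne (not_lt.mp hp) hcfn
          have hrn : r n = t n / (-(cf n)) := by rw [hr]; simp [hp]
          have : r n * cf n = - t n := by
            rw [hrn, div_neg, neg_mul, div_mul_cancel₀ _ hcfn]
          have h2 : ts * cf n ≥ r n * cf n := mul_le_mul_of_nonpos_right hle (le_of_lt hneg)
          simp only [ht2]; linarith
      · by_cases hp : 0 < cf n
        · have hrn : r n = (1 - t n) / cf n := by rw [hr]; simp [hp]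
          have : r n * cf n = 1 - t n := by
            rw [hrn, div_mul_cancel₀ _ hcfn]
          have h2 : ts * cf n ≤ r n * cf n := mul_le_mul_of_nonneg_right hle (le_of_lt hp)
          simp only [ht2]; linarith
        · have hneg : cf n < 0 := lt_of_le_of_ne (not_lt.mp hp) hcfn
          have : ts * cf n ≤ 0 := le_of_lt (mul_neg_of_pos_of_neg htspos hneg)
          simp only [ht2]; linarith
    have ht2sum : ∑ n ∈ I, t2 n • w n = ∑ n ∈ I, t n • w n := by
      simp only [ht2, add_smul, Finset.sum_add_distrib, mul_smul]
      rw [← Finset.smul_sum, hcfI, smul_zero, add_zero]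
    obtain ⟨n₀, hn₀S', hn₀⟩ := Finset.exists_mem_eq_inf' hne r
    have hn₀' : ts = r n₀ := by rw [hts]; exact hn₀
    have hn₀S : n₀ ∈ S := (mem_filter.mp hn₀S').1
    have hn₀cf : cf n₀ ≠ 0 := (mem_filter.mp hn₀S').2
    have ht2n₀ : t2 n₀ = 0 ∨ t2 n₀ = 1 := by
      obtain ⟨h0, h1⟩ := hSfr n₀ hn₀S
      by_cases hp : 0 < cf n₀
      · right
        have hrn : r n₀ = (1 - t n₀) / cf n₀ := by rw [hr]; simp [hp]
        have hcv : r n₀ * cf n₀ = 1 - t n₀ := by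
          rw [hrn, div_mul_cancel₀ _ hn₀cf]
        simp only [ht2]
        rw [hn₀', hcv]
        ring
      · left
        have hneg : cf n₀ < 0 := lt_of_le_of_ne (not_lt.mp hp) hn₀cf
        have hrn : r n₀ = t n₀ / (-(cf n₀)) := by rw [hr]; simp [hp]
        have hcv : r n₀ * cf n₀ = - t n₀ := by
          rw [hrn, div_neg, neg_mul, div_mul_cancel₀ _ hn₀cf]
        simp only [ht2]
        rw [hn₀', hcv]
        ring
    have hsub : (I.filter fun n => t2 n ≠ 0 ∧ t2 n ≠ 1) ⊆ S.erase n₀ := by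
      intro n hn
      rw [mem_filter] at hn
      obtain ⟨hnI, hfr0, hfr1⟩ := hn
      have hcfn : n ∈ S := by
        by_cases hc' : cf n = 0
        · have : t2 n = t n := by simp [ht2, hc']
          rw [hSdef, mem_filter]
          exact ⟨hnI, by rwa [← this], by rwa [← this]⟩
        · exact hcf0 n hc'
      refine Finset.mem_erase.mpr ⟨?_, hcfn⟩
      rintro rfl
      rcases ht2n₀ with h | h
      · exact hfr0 h
      · exact hfr1 h
    have hcard : (I.filter fun n => t2 n ≠ 0 ∧ t2 n ≠ 1).card ≤ c := by
      have h1 := Finset.card_le_card hsub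
      have h2 := Finset.card_erase_le (a := n₀) (s := S)
      have h3 : 1 ≤ S.card := Finset.card_pos.mpr ⟨n₀, hn₀S⟩
      have h4 : (S.erase n₀).card = S.card - 1 := Finset.card_erase_of_mem hn₀S
      omega
    obtain ⟨t', ht'mem, ht'sum, ht'card⟩ := ih t2 hcard ht2mem
    exact ⟨t', ht'mem, by rw [ht'sum, ht2sum], ht'card⟩

end FR

section ST
variable {F : Type*} [NormedAddCommGroup F] [NormedSpace ℝ F] [FiniteDimensional ℝ F]


open Finset

lemma list_norm_sum_le (w : ℕ → F) (δ : ℝ) (hδ : 0 ≤ δ) :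
    ∀ (l : List ℕ), (∀ e ∈ l, ‖w e‖ ≤ δ) → ‖(l.map w).sum‖ ≤ l.length * δ := by
  intro l
  induction l with
  | nil => simp
  | cons e l ih =>
    intro h
    simp only [List.map_cons, List.sum_cons, List.length_cons]
    have h1 : ‖w e‖ ≤ δ := h e List.mem_cons_self
    have h2 := ih (fun e' he' => h e' (List.mem_cons_of_mem e he'))
    calc ‖w e + (l.map w).sum‖ ≤ ‖w e‖ + ‖(l.map w).sum‖ := norm_add_le _ _
    _ ≤ δ + l.length * δ := by linarith
    _ = (l.length + 1) * δ := by ring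
    _ = ((l.length + 1 : ℕ) : ℝ) * δ := by push_cast; ring

lemma steinitz_aux (w : ℕ → F) (δ : ℝ) (hδ : 0 ≤ δ) (m : ℕ) (s : F) (hs : ‖s‖ ≤ m * δ) :
    ∀ (k : ℕ) (A : Finset ℕ) (lam : ℕ → ℝ), A.card = k → (∀ n ∈ A, ‖w n‖ ≤ δ) →
      (Module.finrank ℝ F + 1 < k →
        (∀ n ∈ A, lam n ∈ Set.Icc (0:ℝ) 1) ∧
        (∑ n ∈ A, lam n = (k:ℝ) - ((Module.finrank ℝ F : ℝ) + 1)) ∧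
        (∑ n ∈ A, lam n • w n = (((k:ℝ) - ((Module.finrank ℝ F : ℝ) + 1))/(m:ℝ)) • s)) →
      ∃ l : List ℕ, l.Nodup ∧ l.toFinset = A ∧
        ∀ j, j ≤ k → ‖((l.take j).map w).sum - ((j:ℝ)/(m:ℝ)) • s‖ ≤
          2 * ((Module.finrank ℝ F : ℝ) + 1) * δ := by
  have hjm : ∀ (j : ℕ), ((j:ℝ)/(m:ℝ)) * ‖s‖ ≤ (j:ℝ) * δ := by
    intro j
    rcases Nat.eq_zero_or_pos m with hm | hm
    · subst hm
      simp only [Nat.cast_zero, div_zero, zero_mul]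
      positivity
    · have hm' : (0:ℝ) < m := by exact_mod_cast hm
      calc ((j:ℝ)/m)*‖s‖ ≤ ((j:ℝ)/m)*((m:ℝ)*δ) :=
            mul_le_mul_of_nonneg_left hs (div_nonneg (Nat.cast_nonneg j) (le_of_lt hm'))
      _ = (j:ℝ)*δ := by
        field_simp
  intro k A lam
  induction k using Nat.strong_induction_on generalizing A lam with
  | _ k ih =>
    intro hcard hw hlam
    set d'' : ℝ := (Module.finrank ℝ F : ℝ) + 1 with hd''
    have hd''0 : 0 ≤ d'' := by positivity
    by_cases hk : Module.finrank ℝ F + 1 < k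
    · -- inductive step
      obtain ⟨hlamIcc, hlamSum, hlamVec⟩ := hlam hk
      have hkd : (d'' + 1) ≤ (k:ℝ) := by
        rw [hd'']
        have : (Module.finrank ℝ F + 1 + 1 : ℕ) ≤ k := hk
        exact_mod_cast this
      have hk' : (0:ℝ) < (k:ℝ) - d'' := by linarith
      set ρ : ℝ := ((k:ℝ) - 1 - d'')/((k:ℝ) - d'') with hρ
      have hρ0 : 0 ≤ ρ := div_nonneg (by linarith) (le_of_lt hk')
      have hρ1 : ρ ≤ 1 := by rw [hρ, div_le_one hk']; linarith
      set μ : ℕ → ℝ := fun n => ρ * lam n with hμ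
      have hμIcc : ∀ n ∈ A, μ n ∈ Set.Icc (0:ℝ) 1 := by
        intro n hn
        obtain ⟨h0, h1⟩ := hlamIcc n hn
        constructor
        · exact mul_nonneg hρ0 h0
        · calc ρ * lam n ≤ 1 * 1 := by
                exact mul_le_mul hρ1 h1 h0 zero_le_one
          _ = 1 := by ring
      have hμSum : ∑ n ∈ A, μ n = (k:ℝ) - 1 - d'' := by
        simp only [hμ, ← Finset.mul_sum]
        rw [hlamSum, hρ, div_mul_cancel₀ _ (ne_of_gt hk')]
      have hμVec : ∑ n ∈ A, μ n • w n = (((k:ℝ) - 1 - d'')/(m:ℝ)) • s := by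
        simp only [hμ, mul_smul, ← Finset.smul_sum]
        rw [hlamVec, smul_smul, hρ]
        congr 1
        field_simp
      obtain ⟨ν, hνIcc, hνSum, hνCard⟩ :=
        fracRound (E := F × ℝ) A (fun n => (w n, (1:ℝ))) A.card μ (Finset.card_filter_le _ _) hμIcc
      have hfrk : Module.finrank ℝ (F × ℝ) = Module.finrank ℝ F + 1 := by
        rw [Module.finrank_prod, Module.finrank_self]
      have hfst : ∑ n ∈ A, ν n • w n = ∑ n ∈ A, μ n • w n := by
        have h := congrArg Prod.fst hνSum
        simpa [Prod.fst_sum] using h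
      have hsnd : ∑ n ∈ A, ν n = ∑ n ∈ A, μ n := by
        have h := congrArg Prod.snd hνSum
        simpa [Prod.snd_sum] using h
      have hex : ∃ n₀ ∈ A, ν n₀ = 0 := by
        by_contra hcon
        push_neg at hcon
        set Fr := A.filter (fun n => ν n ≠ 0 ∧ ν n ≠ 1) with hFr
        have hFrA : Fr ⊆ A := Finset.filter_subset _ _
        have hFrcard : Fr.card ≤ Module.finrank ℝ F + 1 := by rw [← hfrk]; exact hνCard
        have hone : ∀ n ∈ A \ Fr, ν n = 1 := by
          intro n hn
          rw [Finset.mem_sdiff] at hn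
          obtain ⟨hnA, hnFr⟩ := hn
          by_contra h1
          exact hnFr (by rw [hFr, Finset.mem_filter]; exact ⟨hnA, hcon n hnA, h1⟩)
        have hsum1 : ((A \ Fr).card : ℝ) = ∑ n ∈ A \ Fr, ν n := by
          rw [Finset.sum_congr rfl hone]
          simp
        have hle : ∑ n ∈ A \ Fr, ν n ≤ ∑ n ∈ A, ν n :=
          Finset.sum_le_sum_of_subset_of_nonneg Finset.sdiff_subset
            (fun n hn _ => (hνIcc n hn).1)
        have hcard2 : (A \ Fr).card = k - Fr.card := by rw [Finset.card_sdiff_of_subset hFrA, hcard]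
        have hcc : ∑ n ∈ A, ν n = (k:ℝ) - 1 - d'' := by rw [hsnd, hμSum]
        have hk2 : Module.finrank ℝ F + 1 + 1 ≤ k := hk
        have hgeN : k - Fr.card ≥ k - (Module.finrank ℝ F + 1) := by omega
        have hgeR : ((A \ Fr).card : ℝ) ≥ (k:ℝ) - d'' := by
          rw [hcard2]
          have h1 : ((k - Fr.card : ℕ) : ℝ) ≥ ((k - (Module.finrank ℝ F + 1) : ℕ) : ℝ) := by
            exact_mod_cast hgeN
          have h2 : ((k - (Module.finrank ℝ F + 1) : ℕ) : ℝ) = (k:ℝ) - d'' := by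
            rw [hd'']
            have : Module.finrank ℝ F + 1 ≤ k := by omega
            push_cast [this]
            ring
          linarith
        linarith
      obtain ⟨n₀, hn₀A, hν₀⟩ := hex
      set A' := A.erase n₀ with hA'
      have hcard' : A'.card = k - 1 := by rw [hA', Finset.card_erase_of_mem hn₀A, hcard]
      have hk1 : 1 ≤ k := by omega
      have hcast : ((k-1:ℕ):ℝ) = (k:ℝ) - 1 := by
        push_cast [hk1]
        ring
      have hsum' : ∑ n ∈ A', ν n = ∑ n ∈ A, ν n := Finset.sum_erase _ hν₀
      have hvec' : ∑ n ∈ A', ν n • w n = ∑ n ∈ A, ν n • w n :=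
        Finset.sum_erase _ (by rw [hν₀, zero_smul])
      have hνSum' : ∑ n ∈ A', ν n = ((k-1:ℕ):ℝ) - d'' := by
        rw [hsum', hsnd, hμSum, hcast]
      have hνVec' : ∑ n ∈ A', ν n • w n = ((((k-1:ℕ):ℝ) - d'')/(m:ℝ)) • s := by
        rw [hvec', hfst, hμVec, hcast]
      obtain ⟨l', hl'nd, hl'fin, hl'bound⟩ :=
        ih (k-1) (by omega) A' ν hcard' (fun n hn => hw n (Finset.erase_subset _ _ hn))
          (fun _ => ⟨fun n hn => hνIcc n (Finset.erase_subset _ _ hn), hνSum', hνVec'⟩)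
      have hl'len : l'.length = k - 1 := by
        rw [← List.toFinset_card_of_nodup hl'nd, hl'fin, hcard']
      have hn₀l' : n₀ ∉ l' := by
        intro hmem
        have : n₀ ∈ A' := by rw [← hl'fin]; exact List.mem_toFinset.mpr hmem
        exact Finset.notMem_erase n₀ A this
      have hndup : (l' ++ [n₀]).Nodup := by
        refine List.Nodup.append hl'nd (List.nodup_singleton n₀) ?_
        intro e he1 he2
        rw [List.mem_singleton] at he2
        subst he2
        exact hn₀l' he1
      have hfin : (l' ++ [n₀]).toFinset = A := by
        rw [List.toFinset_append, List.toFinset_cons, List.toFinset_nil, hl'fin,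
          LawfulSingleton.insert_empty_eq, Finset.union_comm]
        exact Finset.insert_erase hn₀A
      have hlen : (l' ++ [n₀]).length = k := by
        rw [List.length_append, hl'len, List.length_singleton]
        omega
      refine ⟨l' ++ [n₀], hndup, hfin, ?_⟩
      intro j hj
      rcases Nat.lt_or_ge j k with hjk | hjk
      · have hjle : j ≤ k - 1 := by omega
        have htake : (l' ++ [n₀]).take j = l'.take j := by
          apply List.take_append_of_le_length
          omega
        rw [htake]
        exact hl'bound j hjle
      · have hjeq : j = k := le_antisymm hj hjk
        subst hjeq
        have htake : (l' ++ [n₀]).take j = l' ++ [n₀] :=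
          List.take_of_length_le (by omega)
        have hsumA := List.sum_toFinset w hndup
        rw [hfin] at hsumA
        rw [htake, ← hsumA]
        have hdecomp : ∑ n ∈ A, w n =
            (∑ n ∈ A, (1 - lam n) • w n) + ((((j:ℝ) - d'')/(m:ℝ)) • s) := by
          rw [← hlamVec, ← Finset.sum_add_distrib]
          apply Finset.sum_congr rfl
          intro n _
          rw [← add_smul]
          norm_num
        have hb1 : ‖∑ n ∈ A, (1 - lam n) • w n‖ ≤ d'' * δ := by
          calc ‖∑ n ∈ A, (1 - lam n) • w n‖ ≤ ∑ n ∈ A, ‖(1 - lam n) • w n‖ :=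
                norm_sum_le _ _
          _ = ∑ n ∈ A, (1 - lam n) * ‖w n‖ := by
              apply Finset.sum_congr rfl
              intro n hn
              rw [norm_smul, Real.norm_eq_abs, abs_of_nonneg (by linarith [(hlamIcc n hn).2])]
          _ ≤ ∑ n ∈ A, (1 - lam n) * δ := by
              apply Finset.sum_le_sum
              intro n hn
              exact mul_le_mul_of_nonneg_left (hw n hn) (by linarith [(hlamIcc n hn).2])
          _ = ((j:ℝ) - ((j:ℝ) - d'')) * δ := by
              rw [← Finset.sum_mul]
              congr 1
              rw [Finset.sum_sub_distrib, hlamSum, Finset.sum_const, hcard]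
              simp
          _ = d'' * δ := by ring
        have hb2 : ‖(((j:ℝ)-d'')/(m:ℝ)) • s - ((j:ℝ)/(m:ℝ)) • s‖ ≤ d'' * δ := by
          rw [← sub_smul]
          have he : ((j:ℝ)-d'')/(m:ℝ) - (j:ℝ)/(m:ℝ) = -(d''/(m:ℝ)) := by ring
          rw [he, norm_smul, Real.norm_eq_abs, abs_neg,
            abs_of_nonneg (div_nonneg hd''0 (Nat.cast_nonneg m))]
          rcases Nat.eq_zero_or_pos m with hm | hm
          · subst hm
            simp only [Nat.cast_zero, div_zero, zero_mul]
            positivity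
          · have hm' : (0:ℝ) < m := by exact_mod_cast hm
            calc d''/(m:ℝ) * ‖s‖ ≤ d''/(m:ℝ) * ((m:ℝ)*δ) :=
                  mul_le_mul_of_nonneg_left hs (div_nonneg hd''0 (le_of_lt hm'))
            _ = d'' * δ := by
              field_simp
        calc ‖∑ n ∈ A, w n - ((j:ℝ)/(m:ℝ)) • s‖
            = ‖(∑ n ∈ A, (1 - lam n) • w n) +
                ((((j:ℝ)-d'')/(m:ℝ)) • s - ((j:ℝ)/(m:ℝ)) • s)‖ := by
              rw [hdecomp, add_sub_assoc]
        _ ≤ ‖∑ n ∈ A, (1 - lam n) • w n‖ +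
              ‖(((j:ℝ)-d'')/(m:ℝ)) • s - ((j:ℝ)/(m:ℝ)) • s‖ := norm_add_le _ _
        _ ≤ d''*δ + d''*δ := add_le_add hb1 hb2
        _ = 2*d''*δ := by ring
    · -- base case
      push_neg at hk
      refine ⟨A.toList, A.nodup_toList, A.toList_toFinset, ?_⟩
      intro j hj
      have hmem : ∀ e ∈ A.toList.take j, ‖w e‖ ≤ δ := by
        intro e he
        exact hw e (Finset.mem_toList.mp (List.take_subset j A.toList he))
      have h1 : ‖((A.toList.take j).map w).sum‖ ≤ (A.toList.take j).length * δ :=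
        list_norm_sum_le w δ hδ _ hmem
      have h2 : ((A.toList.take j).length : ℝ) * δ ≤ (j:ℝ) * δ := by
        apply mul_le_mul_of_nonneg_right _ hδ
        exact_mod_cast List.length_take_le j A.toList
      have hjd : (j : ℝ) ≤ d'' := by
        rw [hd'']
        have : j ≤ Module.finrank ℝ F + 1 := le_trans hj hk
        exact_mod_cast this
      have h3 : ‖((j:ℝ)/(m:ℝ)) • s‖ ≤ (j:ℝ) * δ := by
        rw [norm_smul, Real.norm_eq_abs, abs_of_nonneg (div_nonneg (Nat.cast_nonneg j) (Nat.cast_nonneg m))]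
        exact hjm j
      calc ‖((A.toList.take j).map w).sum - ((j:ℝ)/(m:ℝ)) • s‖
          ≤ ‖((A.toList.take j).map w).sum‖ + ‖((j:ℝ)/(m:ℝ)) • s‖ := norm_sub_le _ _
      _ ≤ (j:ℝ)*δ + (j:ℝ)*δ := by linarith
      _ ≤ 2 * d'' * δ := by nlinarith

lemma steinitz (w : ℕ → F) (δ : ℝ) (hδ : 0 ≤ δ) (I : Finset ℕ) (hw : ∀ n ∈ I, ‖w n‖ ≤ δ) :
    ∃ l : List ℕ, l.Nodup ∧ l.toFinset = I ∧
      ∀ j, j ≤ I.card → ‖((l.take j).map w).sum - ((j:ℝ)/(I.card:ℝ)) • (∑ n ∈ I, w n)‖ ≤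
        2 * ((Module.finrank ℝ F : ℝ) + 1) * δ := by
  have hs : ‖∑ n ∈ I, w n‖ ≤ (I.card : ℝ) * δ := by
    calc ‖∑ n ∈ I, w n‖ ≤ ∑ n ∈ I, ‖w n‖ := norm_sum_le _ _
    _ ≤ ∑ _n ∈ I, δ := Finset.sum_le_sum hw
    _ = (I.card : ℝ) * δ := by rw [Finset.sum_const, nsmul_eq_mul]
  refine steinitz_aux w δ hδ I.card (∑ n ∈ I, w n) hs I.card I
    (fun _ => (((I.card:ℝ) - ((Module.finrank ℝ F : ℝ)+1))/(I.card:ℝ))) rfl hw ?_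
  intro hm
  have hm0 : (0:ℝ) < (I.card:ℝ) := by
    have : 0 < I.card := by omega
    exact_mod_cast this
  have hd : ((Module.finrank ℝ F : ℝ)+1) + 1 ≤ (I.card:ℝ) := by exact_mod_cast hm
  refine ⟨fun n _ => ⟨?_, ?_⟩, ?_, ?_⟩
  · apply div_nonneg _ (le_of_lt hm0)
    linarith
  · rw [div_le_one hm0]
    linarith
  · rw [Finset.sum_const, nsmul_eq_mul]
    field_simp
  · rw [← Finset.smul_sum]

end ST

section ZONO
open Filter

lemma zono {d : ℕ} (v : ℕ → (Fin d → ℝ))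
    (hconv : ∀ f : (Fin d → ℝ) →L[ℝ] ℝ,
      ∃ l, Tendsto (fun N => ∑ n ∈ Finset.range N, f (v n)) atTop (nhds l))
    (hdiv : ∀ f : (Fin d → ℝ) →L[ℝ] ℝ, f ≠ 0 → ¬ Summable (fun n => |f (v n)|))
    (M : ℕ) (δ ε : ℝ) (hδ : 0 ≤ δ) (hε : 0 < ε)
    (hsmall : ∀ n, M ≤ n → ‖v n‖ ≤ δ) (u : Fin d → ℝ) :
    ∃ (N : ℕ) (G : Finset ℕ), G ⊆ Finset.Ico M N ∧
      ‖(∑ n ∈ G, v n) - u‖ ≤ (d:ℝ) * δ + ε := by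
  classical
  set Z : Set (Fin d → ℝ) :=
    {z | ∃ (N : ℕ) (t : ℕ → ℝ), (∀ n, t n ∈ Set.Icc (0:ℝ) 1) ∧
      z = ∑ n ∈ Finset.Ico M N, t n • v n} with hZ
  have h0Z : (0 : Fin d → ℝ) ∈ Z :=
    ⟨M, fun _ => 0, fun _ => ⟨le_refl 0, zero_le_one⟩, by simp⟩
  have hker : ∀ (K Ni : ℕ) (ti : ℕ → ℝ), Ni ≤ K →
      ∑ n ∈ Finset.Ico M K, (if n < Ni then ti n else 0) • v n
        = ∑ n ∈ Finset.Ico M Ni, ti n • v n := by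
    intro K Ni ti hK
    have hzero : ∀ n ∈ Finset.Ico M K, n ∉ Finset.Ico M Ni →
        (if n < Ni then ti n else 0) • v n = 0 := by
      intro n hn hn2
      have hnn : ¬ n < Ni := fun h => hn2 (Finset.mem_Ico.mpr ⟨(Finset.mem_Ico.mp hn).1, h⟩)
      rw [if_neg hnn, zero_smul]
    have h2 := Finset.sum_subset (Finset.Ico_subset_Ico_right hK) hzero
    rw [← h2]
    apply Finset.sum_congr rfl
    intro n hn
    rw [if_pos (Finset.mem_Ico.mp hn).2]
  have hZconv : Convex ℝ Z := by
    rintro z1 ⟨N1, t1, ht1, rfl⟩ z2 ⟨N2, t2, ht2, rfl⟩ p q hp hq hpq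
    have hv1 : ∀ n, (if n < N1 then t1 n else 0) ∈ Set.Icc (0:ℝ) 1 := by
      intro n; split
      · exact ht1 n
      · exact ⟨le_refl 0, zero_le_one⟩
    have hv2 : ∀ n, (if n < N2 then t2 n else 0) ∈ Set.Icc (0:ℝ) 1 := by
      intro n; split
      · exact ht2 n
      · exact ⟨le_refl 0, zero_le_one⟩
    refine ⟨max N1 N2,
      fun n => p * (if n < N1 then t1 n else 0) + q * (if n < N2 then t2 n else 0), ?_, ?_⟩
    · intro n
      obtain ⟨ha1, hb1⟩ := hv1 n
      obtain ⟨ha2, hb2⟩ := hv2 n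
      constructor
      · exact add_nonneg (mul_nonneg hp ha1) (mul_nonneg hq ha2)
      · calc p * (if n < N1 then t1 n else 0) + q * (if n < N2 then t2 n else 0)
            ≤ p * 1 + q * 1 :=
              add_le_add (mul_le_mul_of_nonneg_left hb1 hp) (mul_le_mul_of_nonneg_left hb2 hq)
        _ = 1 := by linarith
    · simp only [add_smul, Finset.sum_add_distrib, mul_smul]
      rw [← Finset.smul_sum, ← Finset.smul_sum,
        hker _ _ _ (le_max_left N1 N2), hker _ _ _ (le_max_right N1 N2)]
  have key : ∃ z ∈ Z, ‖z - u‖ < ε := by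
    by_contra hcon
    push_neg at hcon
    have hu : u ∉ closure Z := by
      intro hu
      rw [Metric.mem_closure_iff] at hu
      obtain ⟨z, hzZ, hz⟩ := hu ε hε
      rw [dist_comm, dist_eq_norm] at hz
      exact absurd hz (not_lt.mpr (hcon z hzZ))
    obtain ⟨f, u₀, hfZ, hfu⟩ := geometric_hahn_banach_closed_point hZconv.closure
      isClosed_closure hu
    have hf0 : (0:ℝ) < u₀ := by
      have := hfZ 0 (subset_closure h0Z)
      simpa using this
    have hfne : f ≠ 0 := by
      intro h
      rw [h] at hfu
      simp at hfu
      linarith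
    set y : ℕ → ℝ := fun n => f (v n) with hy
    have hNS : ¬ Summable (fun n => |y n|) := hdiv f hfne
    obtain ⟨l, hl⟩ := hconv f
    have habs : Tendsto (fun N => ∑ n ∈ Finset.range N, |y n|) atTop atTop :=
      (not_summable_iff_tendsto_nat_atTop_of_nonneg (fun n => abs_nonneg _)).mp hNS
    have T1 : Tendsto (fun N => ∑ n ∈ Finset.Ico M N, y n) atTop
        (nhds (l - ∑ n ∈ Finset.range M, y n)) := by
      apply Tendsto.congr' _ (hl.sub tendsto_const_nhds)
      filter_upwards [eventually_ge_atTop M] with N hN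
      exact (Finset.sum_Ico_eq_sub _ hN).symm
    have T2 : Tendsto (fun N => ∑ n ∈ Finset.Ico M N, |y n|) atTop atTop := by
      apply Tendsto.congr' _ (tendsto_atTop_add_const_right atTop
        (-(∑ n ∈ Finset.range M, |y n|)) habs)
      filter_upwards [eventually_ge_atTop M] with N hN
      rw [Finset.sum_Ico_eq_sub _ hN]
      ring
    have hpos : Tendsto (fun N => ∑ n ∈ Finset.Ico M N, max (y n) 0) atTop atTop := by
      have hEq : ∀ N, ∑ n ∈ Finset.Ico M N, max (y n) 0
          = ((∑ n ∈ Finset.Ico M N, y n) + (∑ n ∈ Finset.Ico M N, |y n|)) / 2 := by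
        intro N
        rw [← Finset.sum_add_distrib, Finset.sum_div]
        apply Finset.sum_congr rfl
        intro n _
        rcases abs_cases (y n) with ⟨h1, h2⟩ | ⟨h1, h2⟩
        · rw [h1, max_eq_left h2]
          ring
        · rw [h1, max_eq_right (le_of_lt h2)]
          ring
      have := (T1.add_atTop T2).atTop_div_const (by norm_num : (0:ℝ) < 2)
      exact this.congr (fun N => (hEq N).symm)
    obtain ⟨N, hN⟩ := (hpos.eventually_gt_atTop u₀).exists
    set t : ℕ → ℝ := fun n => if 0 < y n then 1 else 0 with ht
    have htIcc : ∀ n, t n ∈ Set.Icc (0:ℝ) 1 := by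
      intro n
      show (if 0 < y n then (1:ℝ) else 0) ∈ Set.Icc (0:ℝ) 1
      split
      · exact ⟨zero_le_one, le_refl 1⟩
      · exact ⟨le_refl 0, zero_le_one⟩
    have hzZ : (∑ n ∈ Finset.Ico M N, t n • v n) ∈ Z := ⟨N, t, htIcc, rfl⟩
    have hfz : f (∑ n ∈ Finset.Ico M N, t n • v n) = ∑ n ∈ Finset.Ico M N, max (y n) 0 := by
      rw [map_sum]
      apply Finset.sum_congr rfl
      intro n _
      rw [map_smul]
      show (if 0 < y n then (1:ℝ) else 0) • f (v n) = max (y n) 0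
      by_cases h : 0 < y n
      · rw [if_pos h]
        simp [hy, max_eq_left (le_of_lt h)]
        exact le_of_lt h
      · rw [if_neg h]
        simp [hy, max_eq_right (not_lt.mp h)]
        exact not_lt.mp h
    have hlt := hfZ _ (subset_closure hzZ)
    rw [hfz] at hlt
    linarith
  obtain ⟨z, hzZ, hzu⟩ := key
  obtain ⟨N, t, htIcc, hzeq⟩ := hzZ
  obtain ⟨t', ht'Icc, ht'sum, ht'card⟩ := fracRound (Finset.Ico M N) v (Finset.Ico M N).card t
    (Finset.card_filter_le _ _) (fun n _ => htIcc n)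
  have hfr : Module.finrank ℝ (Fin d → ℝ) = d := by
    rw [Module.finrank_pi]
    exact Fintype.card_fin d
  set G := (Finset.Ico M N).filter (fun n => t' n = 1) with hG
  set R := (Finset.Ico M N).filter (fun n => t' n ≠ 0 ∧ t' n ≠ 1) with hR
  refine ⟨N, G, Finset.filter_subset _ _, ?_⟩
  have hsplit : ∑ n ∈ Finset.Ico M N, t' n • v n
      = (∑ n ∈ G, v n) + ∑ n ∈ R, t' n • v n := by
    rw [← Finset.sum_filter_add_sum_filter_not (Finset.Ico M N) (fun n => t' n = 1)
      (fun n => t' n • v n)]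
    congr 1
    · rw [hG]
      apply Finset.sum_congr rfl
      intro n hn
      simp only [(Finset.mem_filter.mp hn).2, one_smul]
    · rw [← Finset.sum_filter_of_ne (p := fun n => t' n ≠ 0)
        (f := fun n => t' n • v n) ?_]
      · rw [Finset.filter_filter, hR]
        apply Finset.sum_congr _ (fun n _ => rfl)
        apply Finset.filter_congr
        intro n _
        constructor
        · rintro ⟨h1, h2⟩
          exact ⟨h2, h1⟩
        · rintro ⟨h1, h2⟩
          exact ⟨h2, h1⟩
      · intro n _ hne h0
        simp only [h0, zero_smul] at hne
        exact hne rfl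
  have hRbound : ‖∑ n ∈ R, t' n • v n‖ ≤ (d:ℝ) * δ := by
    calc ‖∑ n ∈ R, t' n • v n‖ ≤ ∑ n ∈ R, ‖t' n • v n‖ := norm_sum_le _ _
    _ ≤ ∑ _n ∈ R, δ := by
        apply Finset.sum_le_sum
        intro n hn
        have hnI : n ∈ Finset.Ico M N := Finset.mem_filter.mp hn |>.1
        have hM : M ≤ n := (Finset.mem_Ico.mp hnI).1
        obtain ⟨h0, h1⟩ := ht'Icc n hnI
        rw [norm_smul, Real.norm_eq_abs, abs_of_nonneg h0]
        calc t' n * ‖v n‖ ≤ 1 * ‖v n‖ :=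
              mul_le_mul_of_nonneg_right h1 (norm_nonneg _)
        _ = ‖v n‖ := one_mul _
        _ ≤ δ := hsmall n hM
    _ = (R.card : ℝ) * δ := by rw [Finset.sum_const, nsmul_eq_mul]
    _ ≤ (d:ℝ) * δ := by
        apply mul_le_mul_of_nonneg_right _ hδ
        have : R.card ≤ d := by rw [← hfr]; exact ht'card
        exact_mod_cast this
  have hGz : ‖(∑ n ∈ G, v n) - z‖ ≤ (d:ℝ) * δ := by
    have : (∑ n ∈ G, v n) - z = -(∑ n ∈ R, t' n • v n) := by
      rw [hzeq, ← ht'sum, hsplit]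
      abel
    rw [this, norm_neg]
    exact hRbound
  calc ‖(∑ n ∈ G, v n) - u‖ = ‖((∑ n ∈ G, v n) - z) + (z - u)‖ := by
        congr 1
        abel
  _ ≤ ‖(∑ n ∈ G, v n) - z‖ + ‖z - u‖ := norm_add_le _ _
  _ ≤ (d:ℝ) * δ + ε := add_le_add hGz (le_of_lt hzu)

end ZONO

section HELP

lemma list_sum_apply {d : ℕ} (f : ℕ → (Fin d → ℝ)) (j : Fin d) :
    ∀ (l : List ℕ), ((l.map f).sum) j = (l.map (fun n => f n j)).sum := by
  intro l
  induction l with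
  | nil => simp
  | cons e l ih => simp [ih]

lemma list_le_foldr_max : ∀ (l : List ℕ), ∀ e ∈ l, e ≤ l.foldr max 0 := by
  intro l
  induction l with
  | nil => simp
  | cons b l ih =>
    intro e he
    rcases List.mem_cons.mp he with rfl | he'
    · exact le_max_left _ _
    · exact le_trans (ih e he') (le_max_right _ _)

end HELP

section STAGE

lemma stage (a : ℕ → ℕ → ℝ) (x : ℕ → ℝ)
    (hz : ∀ (d : ℕ) (M : ℕ) (δ ε : ℝ), 0 ≤ δ → 0 < ε →
       (∀ n, M ≤ n → ‖(fun i : Fin d => a i n)‖ ≤ δ) → ∀ u : Fin d → ℝ,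
       ∃ (N : ℕ) (G : Finset ℕ), G ⊆ Finset.Ico M N ∧
         ‖(∑ n ∈ G, fun i : Fin d => a i n) - u‖ ≤ (d:ℝ) * δ + ε)
    (hsm : ∀ (d : ℕ) (δ : ℝ), 0 < δ → ∀ M₀ : ℕ, ∃ M, M₀ ≤ M ∧
       ∀ n, M ≤ n → ‖(fun i : Fin d => a i n)‖ ≤ δ)
    (hst : ∀ (d : ℕ) (w : ℕ → (Fin d → ℝ)) (δ : ℝ), 0 ≤ δ → ∀ (I : Finset ℕ),
       (∀ n ∈ I, ‖w n‖ ≤ δ) →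
       ∃ l : List ℕ, l.Nodup ∧ l.toFinset = I ∧
         ∀ j, j ≤ I.card → ‖((l.take j).map w).sum - ((j:ℝ)/(I.card:ℝ)) • (∑ n ∈ I, w n)‖ ≤
           2 * ((Module.finrank ℝ (Fin d → ℝ) : ℝ) + 1) * δ)
    (t : ℕ) (L : List ℕ) (hL : L.Nodup) (m : ℕ) (hm : m ∉ L) (ε : ℝ) (hε : 0 < ε) :
    ∃ G : List ℕ,
      ((L ++ (m :: G)).Nodup) ∧
      (∀ i ≤ t, |(((L ++ (m :: G)).map (a i)).sum) - x i| ≤ ε) ∧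
      (∀ i ≤ t, ∀ k, |(((L ++ ((m :: G).take k)).map (a i)).sum) - x i|
          ≤ 2*|((L.map (a i)).sum) - x i| + 2*|a i m| + 2*ε) := by
  classical
  set d := t + 1 with hd
  set w : ℕ → (Fin d → ℝ) := fun n i => a i n with hw
  have hfr : Module.finrank ℝ (Fin d → ℝ) = d := by
    rw [Module.finrank_pi]
    exact Fintype.card_fin d
  set δ : ℝ := ε / (4*d + 4) with hδdef
  have hδpos : 0 < δ := by
    apply div_pos hε
    positivity
  have hδnn : 0 ≤ δ := le_of_lt hδpos
  have hdδ2 : (d:ℝ) * δ ≤ ε / 2 := by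
    rw [hδdef, ← mul_div_assoc, div_le_div_iff₀ (by positivity) (by norm_num : (0:ℝ) < 2)]
    nlinarith [hε.le, Nat.cast_nonneg (α := ℝ) d]
  have hdδ : (d:ℝ) * δ + ε/2 ≤ ε := by linarith
  have h2dδ : 2 * ((d:ℝ) + 1) * δ ≤ ε := by
    rw [hδdef, ← mul_div_assoc, div_le_iff₀ (by positivity : (0:ℝ) < 4*(d:ℝ)+4)]
    nlinarith [hε.le, Nat.cast_nonneg (α := ℝ) d]
  obtain ⟨M, hM₀, hMsmall⟩ := hsm d δ hδpos ((m :: L).foldr max 0 + 1)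
  have hML : ∀ e ∈ m :: L, e < M := by
    intro e he
    have h1 := list_le_foldr_max (m :: L) e he
    omega
  set u : Fin d → ℝ := fun i => x i - ((L.map (a i)).sum) - a i m with hu
  obtain ⟨N, Gf, hGsub, hGnorm⟩ := hz d M δ (ε/2) hδnn (half_pos hε) hMsmall u
  have hGfM : ∀ n ∈ Gf, M ≤ n := fun n hn => (Finset.mem_Ico.mp (hGsub hn)).1
  obtain ⟨l, hlnd, hlfin, hlbound⟩ := hst d w δ hδnn Gf
    (fun n hn => hMsmall n (hGfM n hn))
  set s : Fin d → ℝ := ∑ n ∈ Gf, w n with hs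
  have hsu : ‖s - u‖ ≤ (d:ℝ)*δ + ε/2 := hGnorm
  have hsu' : ‖s - u‖ ≤ ε := le_trans hsu hdδ
  have hllen : l.length = Gf.card := by
    rw [← hlfin]
    exact (List.toFinset_card_of_nodup hlnd).symm
  have hlmem : ∀ e ∈ l, M ≤ e := by
    intro e he
    exact hGfM e (by rw [← hlfin]; exact List.mem_toFinset.mpr he)
  -- nodup
  have hnodup : (L ++ (m :: l)).Nodup := by
    rw [List.nodup_append]
    refine ⟨hL, ?_, ?_⟩
    · rw [List.nodup_cons]
      refine ⟨fun hml => ?_, hlnd⟩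
      have := hlmem m hml
      have := hML m List.mem_cons_self
      omega
    · intro e heL e' hecons hee
      subst hee
      rcases List.mem_cons.mp hecons with rfl | hel
      · exact hm heL
      · have h1 := hlmem e hel
        have h2 := hML e (List.mem_cons_of_mem m heL)
        omega
  -- coordinate bounds
  have hcoord : ∀ (z : Fin d → ℝ) (i : Fin d), |z i| ≤ ‖z‖ := by
    intro z i
    have := norm_le_pi_norm z i
    rwa [Real.norm_eq_abs] at this
  have hsl : ∀ i : Fin d, (l.map (a i)).sum = s i := by
    intro i
    rw [hs, Finset.sum_apply]
    rw [← hlfin, List.sum_toFinset _ hlnd]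
  refine ⟨l, hnodup, ?_, ?_⟩
  · -- endpoint
    intro i hi
    have hid : i < d := by omega
    set iF : Fin d := ⟨i, hid⟩ with hiF
    have key : ((L ++ (m :: l)).map (a i)).sum - x i = s iF - u iF := by
      rw [List.map_append, List.sum_append, List.map_cons, List.sum_cons]
      have : (l.map (a i)).sum = s iF := hsl iF
      rw [this, hu]
      show (L.map (a i)).sum + (a i m + s iF) - x i
        = s iF - (x i - ((L.map (a i)).sum) - a i m)
      ring
    rw [key]
    calc |s iF - u iF| = |(s - u) iF| := by rw [Pi.sub_apply]
    _ ≤ ‖s - u‖ := hcoord _ _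
    _ ≤ ε := hsu'
  · -- prefix bounds
    intro i hi k
    have hid : i < d := by omega
    set iF : Fin d := ⟨i, hid⟩ with hiF
    have husi : |s iF| ≤ |((L.map (a i)).sum) - x i| + |a i m| + ε := by
      have h1 : |s iF - u iF| ≤ ε := by
        calc |s iF - u iF| = |(s - u) iF| := by rw [Pi.sub_apply]
        _ ≤ ‖s - u‖ := hcoord _ _
        _ ≤ ε := hsu'
      have h2 : |u iF| ≤ |((L.map (a i)).sum) - x i| + |a i m| := by
        have e1 : u iF = (-(((L.map (a i)).sum) - x i)) + (-(a i m)) := by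
          show x i - ((L.map (a i)).sum) - a i m = _
          ring
        rw [e1]
        calc |(-(((L.map (a i)).sum) - x i)) + (-(a i m))|
            ≤ |(-(((L.map (a i)).sum) - x i))| + |(-(a i m))| := abs_add_le _ _
        _ = |((L.map (a i)).sum) - x i| + |a i m| := by rw [abs_neg, abs_neg]
      have e2 : s iF = (s iF - u iF) + u iF := by ring
      calc |s iF| = |(s iF - u iF) + u iF| := by rw [← e2]
      _ ≤ |s iF - u iF| + |u iF| := abs_add_le _ _
      _ ≤ _ := by linarith
    rcases Nat.eq_zero_or_pos k with rfl | hk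
    · simp only [List.take_zero, List.append_nil]
      have h1 := abs_nonneg (((L.map (a i)).sum) - x i)
      have h2 := abs_nonneg (a i m)
      linarith
    · obtain ⟨k', rfl⟩ : ∃ k', k = k' + 1 := ⟨k - 1, by omega⟩
      set j := min k' l.length with hj
      have htake2 : l.take k' = l.take j := by
        rcases le_or_gt k' l.length with h | h
        · rw [hj, min_eq_left h]
        · rw [hj, min_eq_right (le_of_lt h), List.take_length,
            List.take_of_length_le (le_of_lt h)]
      have hjle : j ≤ Gf.card := by rw [← hllen]; exact min_le_right _ _
      have hb := hlbound j hjle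
      rw [hfr] at hb
      have h2vec : (((l.take j).map w).sum - ((j:ℝ)/(Gf.card:ℝ)) • s) iF
          = ((l.take j).map (a i)).sum - ((j:ℝ)/(Gf.card:ℝ)) * s iF := by
        rw [Pi.sub_apply, Pi.smul_apply, smul_eq_mul, list_sum_apply w iF]
      have hPc : |((l.take j).map (a i)).sum - ((j:ℝ)/(Gf.card:ℝ)) * s iF|
          ≤ 2*((d:ℝ)+1)*δ := by
        rw [← h2vec]
        exact le_trans (hcoord _ iF) hb
      have hdecomp : ((L ++ ((m :: l).take (k'+1))).map (a i)).sum - x i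
          = ((((L.map (a i)).sum) - x i) + a i m) + ((l.take j).map (a i)).sum := by
        have ht1 : (m :: l).take (k'+1) = m :: l.take k' := rfl
        rw [ht1, List.map_append, List.sum_append, List.map_cons, List.sum_cons, htake2]
        ring
      rw [hdecomp]
      have hc0 : (0:ℝ) ≤ (j:ℝ)/(Gf.card:ℝ) :=
        div_nonneg (Nat.cast_nonneg j) (Nat.cast_nonneg _)
      have hc1 : (j:ℝ)/(Gf.card:ℝ) ≤ 1 := by
        rcases Nat.eq_zero_or_pos Gf.card with h | h
        · have hj0 : j = 0 := by omega
          rw [hj0, h]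
          norm_num
        · rw [div_le_one (by exact_mod_cast h)]
          exact_mod_cast hjle
      have hPb : |((l.take j).map (a i)).sum| ≤ 2*((d:ℝ)+1)*δ + |s iF| := by
        have e3 : ((l.take j).map (a i)).sum
            = (((l.take j).map (a i)).sum - ((j:ℝ)/(Gf.card:ℝ)) * s iF)
              + ((j:ℝ)/(Gf.card:ℝ)) * s iF := by ring
        have h3 : |((j:ℝ)/(Gf.card:ℝ)) * s iF| ≤ |s iF| := by
          rw [abs_mul, abs_of_nonneg hc0]
          exact mul_le_of_le_one_left (abs_nonneg _) hc1
        calc |((l.take j).map (a i)).sum|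
            = |(((l.take j).map (a i)).sum - ((j:ℝ)/(Gf.card:ℝ)) * s iF)
              + ((j:ℝ)/(Gf.card:ℝ)) * s iF| := by rw [← e3]
        _ ≤ |((l.take j).map (a i)).sum - ((j:ℝ)/(Gf.card:ℝ)) * s iF|
              + |((j:ℝ)/(Gf.card:ℝ)) * s iF| := abs_add_le _ _
        _ ≤ 2*((d:ℝ)+1)*δ + |s iF| := add_le_add hPc h3
      have habs2 : |((((L.map (a i)).sum) - x i) + a i m) + ((l.take j).map (a i)).sum|
          ≤ (|((L.map (a i)).sum) - x i| + |a i m|) + |((l.take j).map (a i)).sum| :=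
        le_trans (abs_add_le _ _) (add_le_add_left (abs_add_le _ _) _)
      linarith

end STAGE

/-- A real series is conditionally convergent: its partial sums converge
but the series of absolute values diverges. -/
def CondConv (a : ℕ → ℝ) : Prop :=
  (∃ l : ℝ, Tendsto (fun N => ∑ n ∈ Finset.range N, a n) atTop (nhds l)) ∧
    ¬ Summable fun n => |a n|

theorem countable_independent_levy_steinitz (a : ℕ → ℕ → ℝ)
    (hcc : ∀ i, CondConv (a i))
    (hind : ∀ c : ℕ → ℝ, (Function.support c).Finite →
      (Summable fun n => |∑ᶠ i, c i * a i n|) → c = 0)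
    (x : ℕ → ℝ) :
    ∃ p : Equiv.Perm ℕ, ∀ i,
      Tendsto (fun N => ∑ n ∈ Finset.range N, a i (p n)) atTop (nhds (x i)) := by
  classical
  -- terms tend to zero
  have hterm : ∀ i, Tendsto (fun n => a i n) atTop (nhds 0) := by
    intro i
    obtain ⟨l, hl⟩ := (hcc i).1
    have h1 : Tendsto (fun n => (∑ k ∈ Finset.range (n+1), a i k)
        - ∑ k ∈ Finset.range n, a i k) atTop (nhds (l - l)) :=
      Tendsto.sub (hl.comp (tendsto_add_atTop_nat 1)) hl
    rw [sub_self] at h1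
    apply h1.congr
    intro n
    rw [Finset.sum_range_succ]
    ring
  -- tails are small
  have hsm : ∀ (d : ℕ) (δ : ℝ), 0 < δ → ∀ M₀ : ℕ, ∃ M, M₀ ≤ M ∧
      ∀ n, M ≤ n → ‖(fun i : Fin d => a i n)‖ ≤ δ := by
    intro d δ hδ M₀
    have hev : ∀ᶠ n in atTop, ∀ i : Fin d, |a i n| ≤ δ := by
      rw [eventually_all]
      intro i
      obtain ⟨N, hN⟩ := Metric.tendsto_atTop.mp (hterm i) δ hδ
      rw [eventually_atTop]
      refine ⟨N, fun n hn => ?_⟩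
      have := hN n hn
      rw [Real.dist_eq, sub_zero] at this
      exact this.le
    rw [eventually_atTop] at hev
    obtain ⟨N, hN⟩ := hev
    refine ⟨max N M₀, le_max_right _ _, fun n hn => ?_⟩
    rw [pi_norm_le_iff_of_nonneg hδ.le]
    intro i
    rw [Real.norm_eq_abs]
    exact hN n (le_trans (le_max_left _ _) hn) i
  -- zonotope approximation at each dimension
  have hz : ∀ (d : ℕ) (M : ℕ) (δ ε : ℝ), 0 ≤ δ → 0 < ε →
      (∀ n, M ≤ n → ‖(fun i : Fin d => a i n)‖ ≤ δ) → ∀ u : Fin d → ℝ,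
      ∃ (N : ℕ) (G : Finset ℕ), G ⊆ Finset.Ico M N ∧
        ‖(∑ n ∈ G, fun i : Fin d => a i n) - u‖ ≤ (d:ℝ) * δ + ε := by
    intro d M δ ε hδ hε hsmall u
    have hrep : ∀ f : (Fin d → ℝ) →L[ℝ] ℝ, ∀ z : Fin d → ℝ,
        f z = ∑ i : Fin d, z i * f (fun j => if i = j then 1 else 0) := by
      intro f z
      conv_lhs => rw [pi_eq_sum_univ z]
      rw [map_sum]
      apply Finset.sum_congr rfl
      intro i _
      rw [map_smul, smul_eq_mul]
    have hconv : ∀ f : (Fin d → ℝ) →L[ℝ] ℝ,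
        ∃ l, Tendsto (fun N => ∑ n ∈ Finset.range N, f (fun i : Fin d => a i n))
          atTop (nhds l) := by
      intro f
      choose lim hlim using fun i : Fin d => (hcc i).1
      refine ⟨∑ i : Fin d, lim i * f (fun j => if i = j then 1 else 0), ?_⟩
      have hswap : ∀ N, ∑ n ∈ Finset.range N, f (fun i : Fin d => a i n)
          = ∑ i : Fin d, (∑ n ∈ Finset.range N, a i n)
              * f (fun j => if i = j then 1 else 0) := by
        intro N
        rw [Finset.sum_congr rfl (fun n _ => hrep f _), Finset.sum_comm]
        apply Finset.sum_congr rfl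
        intro i _
        rw [← Finset.sum_mul]
      apply Tendsto.congr (fun N => (hswap N).symm)
      apply tendsto_finset_sum
      intro i _
      exact (hlim i).mul_const _
    have hdiv : ∀ f : (Fin d → ℝ) →L[ℝ] ℝ, f ≠ 0 →
        ¬ Summable (fun n => |f (fun i : Fin d => a i n)|) := by
      intro f hf hsum
      set c : ℕ → ℝ := fun i =>
        if h : i < d then f (fun j => if (⟨i, h⟩ : Fin d) = j then 1 else 0) else 0 with hc
      have hc2 : ∀ i : Fin d, c (i : ℕ) = f (fun j => if i = j then 1 else 0) := by
        intro i
        simp only [hc, dif_pos i.isLt]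
      have hcsupp : (Function.support c).Finite := by
        apply Set.Finite.subset (Set.finite_Iio d)
        intro i hi
        rw [Function.mem_support] at hi
        rw [Set.mem_Iio]
        by_contra hlt
        exact hi (by simp only [hc]; rw [dif_neg hlt])
      have heq : ∀ n, (∑ᶠ i, c i * a i n) = f (fun i : Fin d => a i n) := by
        intro n
        rw [hrep f]
        rw [finsum_eq_sum_of_support_subset (s := Finset.range d) _ ?_]
        · rw [← Fin.sum_univ_eq_sum_range (fun i => c i * a i n) d]
          apply Finset.sum_congr rfl
          intro i _
          rw [hc2 i, mul_comm]
        · intro i hi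
          rw [Function.mem_support] at hi
          simp only [Finset.coe_range, Set.mem_Iio]
          by_contra hlt
          apply hi
          rw [hc]
          simp only [dif_neg hlt]
          ring
      have hc0 := hind c hcsupp (by
        apply hsum.congr
        intro n
        rw [heq n])
      apply hf
      apply ContinuousLinearMap.ext
      intro z
      rw [hrep f z]
      simp only [ContinuousLinearMap.zero_apply]
      apply Finset.sum_eq_zero
      intro i _
      rw [← hc2 i, hc0]
      simp
    exact zono (fun n i => a i n) hconv hdiv M δ ε hδ hε hsmall u
  have hst : ∀ (d : ℕ) (w : ℕ → (Fin d → ℝ)) (δ : ℝ), 0 ≤ δ → ∀ (I : Finset ℕ),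
      (∀ n ∈ I, ‖w n‖ ≤ δ) →
      ∃ l : List ℕ, l.Nodup ∧ l.toFinset = I ∧
        ∀ j, j ≤ I.card → ‖((l.take j).map w).sum - ((j:ℝ)/(I.card:ℝ)) • (∑ n ∈ I, w n)‖ ≤
          2 * ((Module.finrank ℝ (Fin d → ℝ) : ℝ) + 1) * δ :=
    fun d w δ hδ I hI => steinitz w δ hδ I hI
  -- least missing element
  have hexmiss : ∀ L : List ℕ, ∃ n, n ∉ L := by
    intro L
    obtain ⟨n, hn⟩ := Infinite.exists_notMem_finset L.toFinset
    exact ⟨n, fun h => hn (List.mem_toFinset.mpr h)⟩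
  set lm : List ℕ → ℕ := fun L => Nat.find (hexmiss L) with hlmdef
  have hlm1 : ∀ L, lm L ∉ L := fun L => Nat.find_spec (hexmiss L)
  have hlm2 : ∀ L k, k < lm L → k ∈ L := by
    intro L k hk
    have := Nat.find_min (hexmiss L) hk
    simpa using this
  set εf : ℕ → ℝ := fun t => 1/((t:ℝ)+1) with hεfdef
  have hεfpos : ∀ t, 0 < εf t := fun t => by positivity
  choose step hstep using fun (t : ℕ) (L : {L : List ℕ // L.Nodup}) =>
    stage a x hz hsm hst t L.1 L.2 (lm L.1) (hlm1 L.1) (εf t) (hεfpos t)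
  set seqf : ℕ → {L : List ℕ // L.Nodup} :=
    fun t => Nat.rec (⟨[], List.nodup_nil⟩ : {L : List ℕ // L.Nodup})
      (fun t' prev => ⟨prev.1 ++ (lm prev.1 :: step t' prev), (hstep t' prev).1⟩) t
    with hseqf
  set Lt : ℕ → List ℕ := fun t => (seqf t).1 with hLt
  have hseqS : ∀ t, Lt (t+1) = Lt t ++ (lm (Lt t) :: step t (seqf t)) := fun t => rfl
  have hstep2 : ∀ t, ∀ i ≤ t, |((Lt (t+1)).map (a i)).sum - x i| ≤ εf t :=
    fun t => (hstep t (seqf t)).2.1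
  have hstep3 : ∀ t, ∀ i ≤ t, ∀ k,
      |(((Lt t ++ ((lm (Lt t) :: step t (seqf t)).take k)).map (a i)).sum) - x i|
        ≤ 2*|((Lt t).map (a i)).sum - x i| + 2*|a i (lm (Lt t))| + 2*(εf t) :=
    fun t => (hstep t (seqf t)).2.2
  have hnd : ∀ t, (Lt t).Nodup := fun t => (seqf t).2
  have hpre : ∀ t, Lt t <+: Lt (t+1) := fun t => ⟨_, (hseqS t).symm⟩
  have hpre2 : ∀ t t', t ≤ t' → Lt t <+: Lt t' := by
    intro t t' h
    induction t' with
    | zero =>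
      have : t = 0 := by omega
      subst this
      exact List.prefix_rfl
    | succ t' ih =>
      rcases Nat.lt_or_ge t (t'+1) with h2 | h2
      · exact (ih (by omega)).trans (hpre t')
      · have : t = t' + 1 := by omega
        subst this
        exact List.prefix_rfl
  have hlen1 : ∀ t, t ≤ (Lt t).length := by
    intro t
    induction t with
    | zero => omega
    | succ t ih =>
      rw [hseqS t, List.length_append, List.length_cons]
      omega
  set p : ℕ → ℕ := fun j => (Lt (j+1)).getD j 0 with hpdef
  have hgetstable : ∀ t t' j, t ≤ t' → j < (Lt t).length →
      (Lt t').getD j 0 = (Lt t).getD j 0 := by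
    intro t t' j h hj
    obtain ⟨r, hr⟩ := hpre2 t t' h
    rw [← hr]
    exact List.getD_append _ _ _ _ hj
  have hpj : ∀ j t, j+1 ≤ t → p j = (Lt t).getD j 0 := by
    intro j t h
    rw [hpdef]
    exact (hgetstable (j+1) t j h (by have := hlen1 (j+1); omega)).symm
  have hinj : Function.Injective p := by
    intro j j' h
    set T := max j j' + 1 with hT
    have h1 : p j = (Lt T).getD j 0 := hpj j T (by omega)
    have h2 : p j' = (Lt T).getD j' 0 := hpj j' T (by omega)
    have hjT : j < (Lt T).length := by have := hlen1 T; omega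
    have hj'T : j' < (Lt T).length := by have := hlen1 T; omega
    rw [h1, h2, List.getD_eq_getElem _ _ hjT, List.getD_eq_getElem _ _ hj'T] at h
    exact ((hnd T).getElem_inj_iff).mp h
  have hmemp : ∀ n t, n ∈ Lt t → ∃ j, p j = n := by
    intro n t hn
    obtain ⟨j, hj, hjeq⟩ := List.mem_iff_getElem.mp hn
    refine ⟨j, ?_⟩
    have h1 : p j = (Lt (max t (j+1))).getD j 0 := hpj j _ (by omega)
    have h2 := hgetstable t (max t (j+1)) j (le_max_left _ _) hj
    rw [h1, h2, List.getD_eq_getElem _ _ hj, hjeq]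
  have hlmmem : ∀ t, lm (Lt t) ∈ Lt (t+1) := by
    intro t
    rw [hseqS t]
    exact List.mem_append_right _ List.mem_cons_self
  have hlmmono : ∀ t, lm (Lt t) < lm (Lt (t+1)) := by
    intro t
    by_contra h
    push_neg at h
    have hmem : lm (Lt (t+1)) ∈ Lt (t+1) := by
      rcases eq_or_lt_of_le h with heq | hlt
      · rw [heq]
        exact hlmmem t
      · exact (hpre t).subset (hlm2 (Lt t) _ hlt)
    exact hlm1 (Lt (t+1)) hmem
  have hlmge : ∀ t, t ≤ lm (Lt t) := by
    intro t
    induction t with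
    | zero => omega
    | succ t ih =>
      have := hlmmono t
      omega
  have hsurj : Function.Surjective p := by
    intro n
    have h1 : n < lm (Lt (n+1)) := by have := hlmge (n+1); omega
    exact hmemp n (n+1) (hlm2 _ _ h1)
  refine ⟨Equiv.ofBijective p ⟨hinj, hsurj⟩, ?_⟩
  intro i
  have hps : ∀ (T N : ℕ), N ≤ (Lt T).length →
      ∑ n ∈ Finset.range N, a i (p n) = (((Lt T).take N).map (a i)).sum := by
    intro T N
    induction N with
    | zero => simp
    | succ N ih =>
      intro hN
      have hNlt : N < (Lt T).length := by omega
      rw [Finset.sum_range_succ, ih (by omega)]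
      rw [List.map_take, List.map_take, List.sum_take_succ _ N
        (by rw [List.length_map]; exact hNlt)]
      congr 1
      rw [List.getElem_map]
      congr 1
      have h1 : p N = (Lt (max T (N+1))).getD N 0 := hpj N _ (by omega)
      have h2 := hgetstable T (max T (N+1)) N (le_max_left _ _) hNlt
      rw [h1, h2, List.getD_eq_getElem _ _ hNlt]
  rw [Metric.tendsto_atTop]
  intro ε hε
  have hcomp : Tendsto (fun t : ℕ => lm (Lt (t+1))) atTop atTop :=
    tendsto_atTop_mono (fun t => by have := hlmge (t+1); omega)
      (tendsto_add_atTop_nat 1)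
  have habs0 : Tendsto (fun t : ℕ => |a i (lm (Lt (t+1)))|) atTop (nhds 0) := by
    have := ((hterm i).comp hcomp).abs
    simpa using this
  have hef0 : Tendsto εf atTop (nhds 0) := by
    rw [hεfdef]
    exact tendsto_one_div_add_atTop_nhds_zero_nat
  have hef0' : Tendsto (fun t => εf (t+1)) atTop (nhds 0) :=
    hef0.comp (tendsto_add_atTop_nat 1)
  have hbnd : Tendsto (fun t : ℕ =>
      2*(εf t) + 2*|a i (lm (Lt (t+1)))| + 2*(εf (t+1))) atTop (nhds 0) := by
    have h := ((hef0.const_mul 2).add (habs0.const_mul 2)).add (hef0'.const_mul 2)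
    have h2 : ((2:ℝ)*0+2*0)+2*0 = 0 := by norm_num
    rw [← h2]
    exact h
  obtain ⟨T₀, hT₀⟩ := eventually_atTop.mp (hbnd.eventually_lt_const hε)
  set T := max T₀ i with hTdef
  have hiT : i ≤ T := le_max_right T₀ i
  have hT₀T : T₀ ≤ T := le_max_left T₀ i
  refine ⟨(Lt (T+1)).length, ?_⟩
  intro N hN
  have hPT : (Lt (T+1)).length ≤ N := hN
  have hTN : T ≤ N := le_trans (by have := hlen1 (T+1); omega) hN
  obtain ⟨t, htT, hlow, hhigh⟩ :
      ∃ t, T ≤ t ∧ (Lt (t+1)).length ≤ N ∧ N < (Lt (t+2)).length := by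
    refine ⟨Nat.findGreatest (fun t => (Lt (t+1)).length ≤ N) N,
      Nat.le_findGreatest (P := fun t => (Lt (t+1)).length ≤ N) hTN hPT,
      Nat.findGreatest_spec (P := fun t => (Lt (t+1)).length ≤ N) hTN hPT, ?_⟩
    set t' := Nat.findGreatest (fun t => (Lt (t+1)).length ≤ N) N with ht'
    have htn : t' ≤ N := Nat.findGreatest_le N
    rcases Nat.lt_or_ge t' N with h | h
    · have hnP : ¬ ((Lt (t'+1+1)).length ≤ N) :=
        Nat.findGreatest_is_greatest (P := fun t => (Lt (t+1)).length ≤ N) (n := N) (k := t'+1)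
          (by omega) (by omega)
      have he : t' + 1 + 1 = t' + 2 := by omega
      rw [he] at hnP
      omega
    · have ht'N : t' = N := by omega
      have hs : (Lt (t'+1)).length ≤ N :=
        Nat.findGreatest_spec (P := fun t => (Lt (t+1)).length ≤ N) hTN hPT
      rw [ht'N] at hs
      have := hlen1 (N+1)
      omega
  -- decompose prefix
  have hdec : (Lt (t+2)).take N
      = Lt (t+1) ++ ((lm (Lt (t+1)) :: step (t+1) (seqf (t+1))).take (N - (Lt (t+1)).length)) := by
    rw [hseqS (t+1), List.take_append, List.take_of_length_le hlow]
  have hsum := hps (t+2) N (le_of_lt hhigh)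
  show dist (∑ n ∈ Finset.range N, a i (p n)) (x i) < ε
  rw [Real.dist_eq, hsum, hdec]
  have hb3 := hstep3 (t+1) i (by omega) (N - (Lt (t+1)).length)
  have hb2 := hstep2 t i (by omega)
  have hfinal : |((Lt (t+1) ++ ((lm (Lt (t+1)) :: step (t+1) (seqf (t+1))).take
      (N - (Lt (t+1)).length))).map (a i)).sum - x i|
      ≤ 2*(εf t) + 2*|a i (lm (Lt (t+1)))| + 2*(εf (t+1)) := by
    calc _ ≤ 2*|((Lt (t+1)).map (a i)).sum - x i| + 2*|a i (lm (Lt (t+1)))| + 2*(εf (t+1)) := hb3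
    _ ≤ 2*(εf t) + 2*|a i (lm (Lt (t+1)))| + 2*(εf (t+1)) := by
        have := hb2
        linarith
  have hlt := hT₀ t (by omega)
  calc |((Lt (t+1) ++ ((lm (Lt (t+1)) :: step (t+1) (seqf (t+1))).take
      (N - (Lt (t+1)).length))).map (a i)).sum - x i|
      ≤ 2*(εf t) + 2*|a i (lm (Lt (t+1)))| + 2*(εf (t+1)) := hfinal
  _ < ε := hlt
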